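/- (Lemma, integrated closeness of log-densities.) Let ρ(x) = e^{−U(x)}/C and ρ̃(x) = e^{−Ũ(x)}/C̃ be probability densities on ℝ^d with normalizing constants C, C̃ > 0, where U and Ũ are differentiable, both satisfy the (m,b)-dissipativity condition, their gradients ∇U and ∇Ũ are L-Lipschitz, and sup_{x ∈ ℝ^d} ‖∇Ũ(x) − ∇U(x)‖ ≤ ε with ε ∈ (0,1]. Let ρ̂ be any probability density on ℝ^d of the form ρ̂ = e^{−Û}/Ĉ with Û differentiable and satisfying the (m,b)-dissipativity condition. Then there exists a constant C₁ > 0, depending only on m, b, L, d (but not on ε), such that ∫_{ℝ^d} |log ρ(x) − log ρ̃(x)| ρ̂(x) dx ≤ C₁·ε. -/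

import Mathlib

open MeasureTheory Real RealInnerProductSpace

/-- Euclidean space `ℝ^d`. -/
abbrev Euc (d : ℕ) := EuclideanSpace ℝ (Fin d)

noncomputable def Mconst (d : ℕ) (m b L : ℝ) : ℝ :=
  rexp ((b + 2 * L + 3 * m / 4 + 2 * b ^ 2 / m) + 8 / m + (b + 2 * L)) *
    (∫ x : Euc d, rexp (-(m / 8 * ‖x‖ ^ 2))) / (volume (Metric.ball (0:Euc d) 1)).toReal

section AuxLemmas
variable {d : ℕ} {m b L : ℝ}


lemma grad_inner {d : ℕ} (V : Euc d → ℝ) (x y : Euc d) :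
    ⟪gradient V x, y⟫ = fderiv ℝ V x y := by
  rw [gradient]; exact InnerProductSpace.toDual_symm_apply

lemma hasDerivAt_line {d : ℕ} {V : Euc d → ℝ} (hV : Differentiable ℝ V) (y : Euc d) (r : ℝ) :
    HasDerivAt (fun t : ℝ => V (t • y)) ⟪y, gradient V (r • y)⟫ r := by
  have h1 : HasDerivAt (fun t : ℝ => t • y) y r := by simpa using (hasDerivAt_id r).smul_const y
  have h2 := ((hV (r • y)).hasFDerivAt).comp_hasDerivAt r h1
  have : (fderiv ℝ V (r • y)) y = ⟪y, gradient V (r • y)⟫ := by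
    rw [real_inner_comm, grad_inner]
  rwa [this] at h2

/-- Ray lemma. -/
lemma ray_bound {d : ℕ} {m b : ℝ} (hm : 0 < m) (hb : 0 ≤ b) {V : Euc d → ℝ}
    (hV : Differentiable ℝ V)
    (hdis : ∀ x, ⟪x, gradient V x⟫ ≥ m * ‖x‖ ^ 2 - b)
    (y : Euc d) {c : ℝ} (hc : 1 ≤ c) :
    V y + m * ‖y‖ ^ 2 * (c ^ 2 - 1) / 2 - b * Real.log c ≤ V (c • y) := by
  set F : ℝ → ℝ := fun r => V (r • y) - m * ‖y‖ ^ 2 * r ^ 2 / 2 + b * Real.log r with hF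
  have key : ∀ r : ℝ, 0 < r → HasDerivAt F
      (⟪y, gradient V (r • y)⟫ - m * ‖y‖ ^ 2 * r + b * r⁻¹) r := by
    intro r hr
    have h1 := hasDerivAt_line hV y r
    have h2 : HasDerivAt (fun t : ℝ => m * ‖y‖ ^ 2 * t ^ 2 / 2) (m * ‖y‖ ^ 2 * r) r := by
      have := ((hasDerivAt_pow 2 r).const_mul (m * ‖y‖ ^ 2)).div_const 2
      exact this.congr_deriv (by norm_num; ring)
    have h3 : HasDerivAt (fun t : ℝ => b * Real.log t) (b * r⁻¹) r :=
      (Real.hasDerivAt_log (ne_of_gt hr)).const_mul b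
    exact (h1.sub h2).add h3
  have hderiv_nonneg : ∀ r ∈ interior (Set.Icc 1 c), 0 ≤ deriv F r := by
    intro r hr
    rw [interior_Icc] at hr
    have hr1 : (1:ℝ) < r := hr.1
    have hrpos : 0 < r := lt_trans one_pos hr1
    rw [(key r hrpos).deriv]
    have hd := hdis (r • y)
    rw [real_inner_smul_left, norm_smul] at hd
    simp only [Real.norm_eq_abs, abs_of_pos hrpos] at hd
    have h5 : ⟪y, gradient V (r • y)⟫ ≥ m * (r * ‖y‖) ^ 2 / r - b / r := by
      rw [ge_iff_le, div_sub_div_same, div_le_iff₀ hrpos]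
      nlinarith [hd]
    have : m * (r * ‖y‖) ^ 2 / r - b / r = m * ‖y‖ ^ 2 * r - b * r⁻¹ := by
      field_simp
    rw [this] at h5
    linarith [h5]
  have hcont : ContinuousOn F (Set.Icc 1 c) := by
    apply ContinuousOn.add
    · exact ((hV.continuous.comp (continuous_id.smul continuous_const)).continuousOn).sub
        (by fun_prop)
    · exact (continuousOn_const.mul (Real.continuousOn_log.mono (by
        intro t ht; simp only [Set.mem_compl_iff, Set.mem_singleton_iff]
        exact ne_of_gt (lt_of_lt_of_le one_pos ht.1))))
  have hdiff : DifferentiableOn ℝ F (interior (Set.Icc 1 c)) := by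
    intro r hr
    rw [interior_Icc] at hr
    exact ((key r (lt_trans one_pos hr.1)).differentiableAt).differentiableWithinAt
  have hmono := monotoneOn_of_deriv_nonneg (convex_Icc 1 c) hcont (by rwa [interior_Icc] at hdiff ⊢) (by rwa [interior_Icc] at hderiv_nonneg ⊢)
  have h := hmono (Set.left_mem_Icc.2 hc) (Set.right_mem_Icc.2 hc) hc
  simp only [hF, one_smul, one_pow, Real.log_one, mul_zero, add_zero] at h
  have : V y - m * ‖y‖ ^ 2 * 1 / 2 ≤ V (c • y) - m * ‖y‖ ^ 2 * c ^ 2 / 2 + b * Real.log c := by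
    simpa using h
  linarith

lemma norm_gradient_eq {d : ℕ} (V : Euc d → ℝ) (x : Euc d) :
    ‖gradient V x‖ = ‖fderiv ℝ V x‖ := by
  rw [gradient]; exact LinearIsometryEquiv.norm_map _ _

/-- Norm of the gradient at the origin. -/
lemma grad_zero_bound {d : ℕ} {m b L : ℝ} (hm : 0 < m) (hb : 0 ≤ b) (hL : 0 ≤ L)
    {V : Euc d → ℝ}
    (hdis : ∀ x, ⟪x, gradient V x⟫ ≥ m * ‖x‖ ^ 2 - b)
    (hlip : LipschitzWith (Real.toNNReal L) (fun x => gradient V x)) :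
    ‖gradient V 0‖ ≤ b + L := by
  set g := gradient V 0 with hg
  rcases eq_or_ne g 0 with h0 | h0
  · rw [h0]; simp; linarith
  · set x : Euc d := -(‖g‖⁻¹ • g) with hx
    have hgn : (0:ℝ) < ‖g‖ := norm_pos_iff.2 h0
    have hxn : ‖x‖ = 1 := by
      rw [hx, norm_neg, norm_smul, norm_inv, norm_norm, inv_mul_cancel₀ (ne_of_gt hgn)]
    have h1 : ⟪x, gradient V x⟫ ≥ m - b := by
      have := hdis x; rwa [hxn, one_pow, mul_one] at this
    have h2 : ‖gradient V x - g‖ ≤ L := by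
      have := hlip.dist_le_mul x 0
      rw [dist_eq_norm, dist_eq_norm, sub_zero, hxn, mul_one] at this
      simpa [Real.coe_toNNReal L hL] using this
    have h3 : ⟪x, gradient V x - g⟫ ≤ L := by
      have := abs_real_inner_le_norm x (gradient V x - g)
      rw [hxn, one_mul] at this
      have := abs_le.1 this
      linarith [this.2, h2]
    have h4 : ⟪x, g⟫ = -‖g‖ := by
      rw [hx, inner_neg_left, real_inner_smul_left, real_inner_self_eq_norm_sq]
      field_simp
    have h5 : ⟪x, g⟫ = ⟪x, gradient V x⟫ - ⟪x, gradient V x - g⟫ := by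
      rw [inner_sub_right]; ring
    have h6 : -‖g‖ ≥ m - b - L := by rw [← h4, h5]; linarith
    linarith

/-- Local Lipschitz bound around the origin. -/
lemma local_bound {d : ℕ} {m b L : ℝ} (hm : 0 < m) (hb : 0 ≤ b) (hL : 0 ≤ L)
    {V : Euc d → ℝ} (hV : Differentiable ℝ V)
    (hdis : ∀ x, ⟪x, gradient V x⟫ ≥ m * ‖x‖ ^ 2 - b)
    (hlip : LipschitzWith (Real.toNNReal L) (fun x => gradient V x)) (x : Euc d) :
    |V x - V 0| ≤ (b + L + L * ‖x‖) * ‖x‖ := by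
  have key : ∀ z ∈ Metric.closedBall (0 : Euc d) ‖x‖, ‖fderiv ℝ V z‖ ≤ b + L + L * ‖x‖ := by
    intro z hz
    rw [← norm_gradient_eq]
    have h1 : ‖gradient V z - gradient V 0‖ ≤ L * ‖z‖ := by
      have := hlip.dist_le_mul z 0
      rw [dist_eq_norm, dist_eq_norm, sub_zero] at this
      simpa [Real.coe_toNNReal L hL] using this
    have h2 := grad_zero_bound hm hb hL hdis hlip
    have h3 : ‖z‖ ≤ ‖x‖ := by simpa [Metric.mem_closedBall, dist_zero_right] using hz
    calc ‖gradient V z‖ ≤ ‖gradient V z - gradient V 0‖ + ‖gradient V 0‖ := by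
          have e : gradient V z = (gradient V z - gradient V 0) + gradient V 0 := by abel
          nth_rewrite 1 [e]; exact norm_add_le _ _
      _ ≤ L * ‖z‖ + (b + L) := by gcongr
      _ ≤ b + L + L * ‖x‖ := by nlinarith
  have := (convex_closedBall (0:Euc d) ‖x‖).norm_image_sub_le_of_norm_fderiv_le
    (fun z _ => hV z) key (Metric.mem_closedBall_self (norm_nonneg x))
    (show x ∈ Metric.closedBall (0:Euc d) ‖x‖ by simp [Metric.mem_closedBall])
  calc |V x - V 0| = ‖V x - V 0‖ := rfl
    _ ≤ (b + L + L * ‖x‖) * ‖x - 0‖ := this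
    _ = (b + L + L * ‖x‖) * ‖x‖ := by rw [sub_zero]


lemma aux_texp {a t : ℝ} (ha : 0 < a) (ht : 0 ≤ t) :
    t * rexp (-(a * t ^ 2)) ≤ 1 + 4 / a ^ 2 := by
  have hpos : 0 < 4 / a ^ 2 := by positivity
  rcases le_or_gt t 1 with h1 | h1
  · have : rexp (-(a * t ^ 2)) ≤ 1 := by
      rw [Real.exp_le_one_iff]; nlinarith
    nlinarith [Real.exp_pos (-(a * t ^ 2))]
  · have e0 : a * t ^ 2 / 2 + 1 ≤ rexp (a * t ^ 2 / 2) := Real.add_one_le_exp _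
    have e1 : a ^ 2 * t ^ 4 / 4 ≤ rexp (a * t ^ 2) := by
      have h2 : rexp (a * t ^ 2) = rexp (a * t ^ 2 / 2) * rexp (a * t ^ 2 / 2) := by
        rw [← Real.exp_add]; ring_nf
      rw [h2]
      nlinarith [Real.exp_pos (a * t ^ 2 / 2), sq_nonneg (a * t ^ 2 / 2), mul_pos ha (by positivity : (0:ℝ) < t ^ 2)]
    have e2 : (0:ℝ) < a ^ 2 * t ^ 4 / 4 := by positivity
    have e3 : (rexp (a * t ^ 2))⁻¹ ≤ (a ^ 2 * t ^ 4 / 4)⁻¹ := by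
      exact inv_anti₀ e2 e1
    rw [Real.exp_neg]
    have e4 : t * (rexp (a * t ^ 2))⁻¹ ≤ t * (a ^ 2 * t ^ 4 / 4)⁻¹ := by
      apply mul_le_mul_of_nonneg_left e3 ht
    have e5 : t * (a ^ 2 * t ^ 4 / 4)⁻¹ = 4 / (a ^ 2 * t ^ 3) := by
      field_simp
    have e6 : 4 / (a ^ 2 * t ^ 3) ≤ 4 / a ^ 2 := by
      apply div_le_div_of_nonneg_left (by norm_num) (by positivity)
      have h3 : (1:ℝ) ≤ t ^ 3 := one_le_pow₀ (le_of_lt h1)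
      nlinarith [sq_nonneg a, h3]
    linarith [e4, e5 ▸ e4]

lemma aux_texp2 {t : ℝ} (ht : 0 ≤ t) : t * rexp t ≤ rexp (2 * t) := by
  have h1 : t ≤ rexp t := le_trans (by linarith) (Real.add_one_le_exp t)
  have h2 : rexp (2 * t) = rexp t * rexp t := by rw [← Real.exp_add]; ring_nf
  rw [h2]
  nlinarith [Real.exp_pos t]

lemma aux_amgm {mm t : ℝ} (hm : 0 < mm) (ht : 0 ≤ t) : 2 * t ≤ mm / 8 * t ^ 2 + 8 / mm := by
  have h := sq_nonneg (mm * t - 8)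
  have : 0 < mm := hm
  rw [← sub_nonneg]
  have expand : mm / 8 * t ^ 2 + 8 / mm - 2 * t = (mm * t - 8) ^ 2 / (8 * mm) := by
    field_simp; ring
  rw [expand]
  positivity


lemma growth_bound (hm : 0 < m) (hb : 0 ≤ b) (hL : 0 ≤ L)
    {V : Euc d → ℝ} (hV : Differentiable ℝ V)
    (hdis : ∀ x, ⟪x, gradient V x⟫ ≥ m * ‖x‖ ^ 2 - b)
    (hlip : LipschitzWith (Real.toNNReal L) (fun x => gradient V x)) (x : Euc d) :
    V 0 + m / 4 * ‖x‖ ^ 2 - (b + 2 * L + 3 * m / 4 + 2 * b ^ 2 / m) ≤ V x := by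
  rcases le_or_gt ‖x‖ 1 with h1 | h1
  · have h2 := local_bound hm hb hL hV hdis hlip x
    have h3 := abs_le.1 h2
    have hn := norm_nonneg x
    have e1 : ‖x‖ ^ 2 ≤ 1 := by nlinarith
    have h4 : (b + L + L * ‖x‖) * ‖x‖ ≤ b + 2 * L := by
      nlinarith [mul_le_mul_of_nonneg_left h1 hb, mul_le_mul_of_nonneg_left h1 hL,
        mul_le_mul_of_nonneg_left e1 hL]
    have h5 : m / 4 * ‖x‖ ^ 2 ≤ m / 4 := by
      nlinarith [mul_le_mul_of_nonneg_left e1 (le_of_lt hm)]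
    have hbm : 0 ≤ 2 * b ^ 2 / m := by positivity
    nlinarith [h3.1]
  · set r := ‖x‖ with hr
    have hrpos : (0:ℝ) < r := lt_trans one_pos h1
    set y : Euc d := r⁻¹ • x with hy
    have hyn : ‖y‖ = 1 := by
      rw [hy, norm_smul, norm_inv, norm_norm, ← hr, inv_mul_cancel₀ (ne_of_gt hrpos)]
    have hcy : r • y = x := by
      rw [hy, smul_smul, mul_inv_cancel₀ (ne_of_gt hrpos), one_smul]
    have h2 := ray_bound hm hb hV hdis y (le_of_lt h1)
    rw [hcy, hyn] at h2
    have h3 := local_bound hm hb hL hV hdis hlip y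
    rw [hyn] at h3
    have h4 := (abs_le.1 h3).1
    have hlog : Real.log r ≤ r - 1 := Real.log_le_sub_one_of_pos hrpos
    have hblog : b * Real.log r ≤ b * r := by nlinarith
    have hbr : b * r ≤ m / 8 * r ^ 2 + 2 * b ^ 2 / m := by
      rw [← sub_nonneg]
      have expand : m / 8 * r ^ 2 + 2 * b ^ 2 / m - b * r = (m * r - 4 * b) ^ 2 / (8 * m) := by
        field_simp; ring
      rw [expand]; positivity
    -- combine
    have hr1 : 1 ≤ r := le_of_lt h1
    nlinarith [h2, h4, hblog, hbr, sq_nonneg r]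

/-- `e^{εt} ≤ 1 + ε t e^t` for `0 ≤ ε ≤ 1`, `0 ≤ t`. -/
lemma aux_eps_exp {ε t : ℝ} (hε : 0 ≤ ε) (hε1 : ε ≤ 1) (ht : 0 ≤ t) :
    rexp (ε * t) ≤ 1 + ε * t * rexp t := by
  have h1 : (1 - ε * t) ≤ rexp (-(ε * t)) := by
    have := Real.add_one_le_exp (-(ε * t)); linarith
  have h2 : rexp (ε * t) * (1 - ε * t) ≤ 1 := by
    calc rexp (ε * t) * (1 - ε * t) ≤ rexp (ε * t) * rexp (-(ε * t)) := by
          apply mul_le_mul_of_nonneg_left h1 (le_of_lt (Real.exp_pos _))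
      _ = 1 := by rw [← Real.exp_add]; simp
  have h3 : rexp (ε * t) ≤ rexp t := Real.exp_le_exp.2 (by nlinarith)
  nlinarith [Real.exp_pos (ε * t), mul_nonneg (mul_nonneg hε ht) (le_of_lt (Real.exp_pos (ε*t)))]

/-- closeness of potentials from closeness of gradients -/
lemma pot_close {U Ut : Euc d → ℝ} (hU : Differentiable ℝ U) (hUt : Differentiable ℝ Ut)
    {ε : ℝ} (hε : 0 ≤ ε) (hcl : ∀ x, ‖gradient Ut x - gradient U x‖ ≤ ε) (x : Euc d) :
    |(Ut x - U x) - (Ut 0 - U 0)| ≤ ε * ‖x‖ := by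
  have key : ∀ z ∈ (Set.univ : Set (Euc d)), ‖fderiv ℝ (fun w => Ut w - U w) z‖ ≤ ε := by
    intro z _
    have hd : fderiv ℝ (fun w => Ut w - U w) z = fderiv ℝ Ut z - fderiv ℝ U z :=
      fderiv_sub (hUt z) (hU z)
    rw [hd]
    have : ‖gradient Ut z - gradient U z‖ = ‖fderiv ℝ Ut z - fderiv ℝ U z‖ := by
      rw [gradient, gradient, ← map_sub]
      exact LinearIsometryEquiv.norm_map _ _
    rw [← this]; exact hcl z
  have := convex_univ.norm_image_sub_le_of_norm_fderiv_le
    (f := fun w => Ut w - U w) (fun z _ => (hUt z).sub (hU z)) key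
    (Set.mem_univ 0) (Set.mem_univ x)
  simpa [sub_zero] using this

lemma gauss_integrable {a : ℝ} (ha : 0 < a) :
    Integrable (fun x : Euc d => rexp (-(a * ‖x‖ ^ 2))) := by
  have h := (GaussianFourier.integrable_cexp_neg_mul_sq_norm_add
    (V := Euc d) (b := (a : ℂ)) (by simpa using ha) 0 (0 : Euc d)).norm
  refine h.congr (Filter.Eventually.of_forall fun x => ?_)
  show ‖Complex.exp _‖ = _
  rw [Complex.norm_exp]
  congr 1
  have : ((‖x‖ : ℂ) ^ 2).re = (‖x‖:ℝ) ^ 2 := by norm_cast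
  simp [Complex.add_re, Complex.mul_re, this]

/-- Lower bound for the normalizing constant. -/
lemma normconst_lower (hm : 0 < m) (hb : 0 ≤ b) (hL : 0 ≤ L)
    {V : Euc d → ℝ} (hV : Differentiable ℝ V)
    (hdis : ∀ x, ⟪x, gradient V x⟫ ≥ m * ‖x‖ ^ 2 - b)
    (hlip : LipschitzWith (Real.toNNReal L) (fun x => gradient V x))
    (hInt : Integrable (fun x : Euc d => rexp (-(V x)))) :
    (volume (Metric.ball (0:Euc d) 1)).toReal * rexp (-(V 0) - (b + 2 * L)) ≤
      ∫ x : Euc d, rexp (-(V x)) := by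
  have h1 : ∀ x ∈ Metric.ball (0:Euc d) 1, rexp (-(V 0) - (b + 2 * L)) ≤ rexp (-(V x)) := by
    intro x hx
    have hxn : ‖x‖ < 1 := by simpa [Metric.mem_ball, dist_zero_right] using hx
    have h2 := (abs_le.1 (local_bound hm hb hL hV hdis hlip x)).2
    have hn := norm_nonneg x
    apply Real.exp_le_exp.2
    have e1 : ‖x‖ ^ 2 ≤ 1 := by nlinarith
    have : (b + L + L * ‖x‖) * ‖x‖ ≤ b + 2 * L := by
      nlinarith [mul_le_mul_of_nonneg_left hxn.le hb, mul_le_mul_of_nonneg_left hxn.le hL,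
        mul_le_mul_of_nonneg_left e1 hL]
    linarith
  have h3 := setIntegral_ge_of_const_le (μ := volume) Metric.isOpen_ball.measurableSet
    measure_ball_lt_top.ne h1 hInt.integrableOn
  have h4 : ∫ x in Metric.ball (0:Euc d) 1, rexp (-(V x)) ≤ ∫ x : Euc d, rexp (-(V x)) :=
    setIntegral_le_integral hInt (Filter.Eventually.of_forall fun x => (Real.exp_pos _).le)
  calc (volume (Metric.ball (0:Euc d) 1)).toReal * rexp (-(V 0) - (b + 2 * L))
      = rexp (-(V 0) - (b + 2 * L)) * (volume (Metric.ball (0:Euc d) 1)).toReal := by ring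
    _ ≤ ∫ x in Metric.ball (0:Euc d) 1, rexp (-(V x)) := by rw [smul_eq_mul, mul_comm] at h3; exact h3
    _ ≤ _ := h4

/-- Pointwise Gaussian domination of `‖x‖ e^{‖x‖} e^{-V x}`. -/
lemma P_pointwise (hm : 0 < m) (hb : 0 ≤ b) (hL : 0 ≤ L)
    {V : Euc d → ℝ} (hV : Differentiable ℝ V)
    (hdis : ∀ x, ⟪x, gradient V x⟫ ≥ m * ‖x‖ ^ 2 - b)
    (hlip : LipschitzWith (Real.toNNReal L) (fun x => gradient V x)) (x : Euc d) :
    ‖x‖ * rexp ‖x‖ * rexp (-(V x)) ≤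
      rexp (-(V 0) + (b + 2 * L + 3 * m / 4 + 2 * b ^ 2 / m) + 8 / m) *
        rexp (-(m / 8 * ‖x‖ ^ 2)) := by
  set c₀ := b + 2 * L + 3 * m / 4 + 2 * b ^ 2 / m with hc₀
  have hn := norm_nonneg x
  have h1 : rexp (-(V x)) ≤ rexp (-(V 0) + c₀ - m / 4 * ‖x‖ ^ 2) := by
    apply Real.exp_le_exp.2
    have := growth_bound hm hb hL hV hdis hlip x
    linarith
  have h2 : ‖x‖ * rexp ‖x‖ ≤ rexp (2 * ‖x‖) := aux_texp2 hn
  have h3 : rexp (2 * ‖x‖) ≤ rexp (m / 8 * ‖x‖ ^ 2 + 8 / m) :=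
    Real.exp_le_exp.2 (aux_amgm hm hn)
  calc ‖x‖ * rexp ‖x‖ * rexp (-(V x))
      ≤ rexp (m / 8 * ‖x‖ ^ 2 + 8 / m) * rexp (-(V 0) + c₀ - m / 4 * ‖x‖ ^ 2) := by
        apply mul_le_mul (le_trans h2 h3) h1 (Real.exp_pos _).le (Real.exp_pos _).le
    _ = rexp (-(V 0) + c₀ + 8 / m) * rexp (-(m / 8 * ‖x‖ ^ 2)) := by
        rw [← Real.exp_add, ← Real.exp_add]; congr 1; ring

/-- Integrability and bound for the exponential-moment integral. -/
lemma P_bound (hm : 0 < m) (hb : 0 ≤ b) (hL : 0 ≤ L)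
    {V : Euc d → ℝ} (hV : Differentiable ℝ V)
    (hdis : ∀ x, ⟪x, gradient V x⟫ ≥ m * ‖x‖ ^ 2 - b)
    (hlip : LipschitzWith (Real.toNNReal L) (fun x => gradient V x)) :
    Integrable (fun x : Euc d => ‖x‖ * rexp ‖x‖ * rexp (-(V x))) ∧
    ∫ x : Euc d, ‖x‖ * rexp ‖x‖ * rexp (-(V x)) ≤
      rexp (-(V 0) + (b + 2 * L + 3 * m / 4 + 2 * b ^ 2 / m) + 8 / m) *
        ∫ x : Euc d, rexp (-(m / 8 * ‖x‖ ^ 2)) := by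
  have hg : Integrable (fun x : Euc d => rexp (-(m / 8 * ‖x‖ ^ 2))) :=
    gauss_integrable (by linarith)
  have hgc := hg.const_mul (rexp (-(V 0) + (b + 2 * L + 3 * m / 4 + 2 * b ^ 2 / m) + 8 / m))
  have hmeas : AEStronglyMeasurable (fun x : Euc d => ‖x‖ * rexp ‖x‖ * rexp (-(V x))) volume := by
    apply Continuous.aestronglyMeasurable
    have hVc := hV.continuous
    fun_prop
  have hInt : Integrable (fun x : Euc d => ‖x‖ * rexp ‖x‖ * rexp (-(V x))) := by
    apply hgc.mono' hmeas
    refine Filter.Eventually.of_forall fun x => ?_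
    have h := P_pointwise hm hb hL hV hdis hlip x
    have hn := norm_nonneg x
    rw [Real.norm_eq_abs, abs_of_nonneg (by positivity)]
    exact h
  refine ⟨hInt, ?_⟩
  have := integral_mono hInt hgc (fun x => P_pointwise hm hb hL hV hdis hlip x)
  calc ∫ x : Euc d, ‖x‖ * rexp ‖x‖ * rexp (-(V x))
      ≤ ∫ x : Euc d, rexp (-(V 0) + (b + 2 * L + 3 * m / 4 + 2 * b ^ 2 / m) + 8 / m) *
          rexp (-(m / 8 * ‖x‖ ^ 2)) := this
    _ = _ := integral_const_mul _ _

/-- Moment bound for a merely dissipative potential. -/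
lemma hat_moment (hm : 0 < m) (hb : 0 ≤ b)
    {V : Euc d → ℝ} (hV : Differentiable ℝ V)
    (hdis : ∀ x, ⟪x, gradient V x⟫ ≥ m * ‖x‖ ^ 2 - b)
    (hInt : Integrable (fun x : Euc d => rexp (-(V x)))) :
    Integrable (fun x : Euc d => ‖x‖ * rexp (-(V x))) ∧
    ∫ x : Euc d, ‖x‖ * rexp (-(V x)) ≤
      (rexp (b * Real.log 2) * (1 + 256 / (9 * m ^ 2)) * 2 ^ d) *
        ∫ x : Euc d, rexp (-(V x)) := by
  set K := rexp (b * Real.log 2) * (1 + 256 / (9 * m ^ 2)) with hK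
  have hKpos : 0 < K := by positivity
  -- pointwise bound
  have hpt : ∀ x : Euc d, ‖x‖ * rexp (-(V x)) ≤ K * rexp (-(V ((2:ℝ)⁻¹ • x))) := by
    intro x
    have hray := ray_bound hm hb hV hdis ((2:ℝ)⁻¹ • x) (by norm_num : (1:ℝ) ≤ 2)
    have h2x : (2:ℝ) • ((2:ℝ)⁻¹ • x) = x := by
      rw [smul_smul]; norm_num
    rw [h2x] at hray
    have hny : ‖(2:ℝ)⁻¹ • x‖ = 2⁻¹ * ‖x‖ := by
      rw [norm_smul]; norm_num
    rw [hny] at hray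
    -- hray : V (2⁻¹ • x) + m * (2⁻¹*‖x‖)^2 * (2^2-1)/2 - b * log 2 ≤ V x
    have hVx : -(V x) ≤ -(V ((2:ℝ)⁻¹ • x)) + b * Real.log 2 - 3 * m / 8 * ‖x‖ ^ 2 := by
      nlinarith [hray]
    have hn := norm_nonneg x
    calc ‖x‖ * rexp (-(V x))
        ≤ ‖x‖ * rexp (-(V ((2:ℝ)⁻¹ • x)) + b * Real.log 2 - 3 * m / 8 * ‖x‖ ^ 2) := by
          apply mul_le_mul_of_nonneg_left (Real.exp_le_exp.2 hVx) hn
      _ = (‖x‖ * rexp (-(3 * m / 8 * ‖x‖ ^ 2))) * (rexp (b * Real.log 2) *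
            rexp (-(V ((2:ℝ)⁻¹ • x)))) := by
          rw [show -(V ((2:ℝ)⁻¹ • x)) + b * Real.log 2 - 3 * m / 8 * ‖x‖ ^ 2
            = (-(3 * m / 8 * ‖x‖ ^ 2)) + (b * Real.log 2 + -(V ((2:ℝ)⁻¹ • x))) by ring,
            Real.exp_add, Real.exp_add]
          ring
      _ ≤ (1 + 256 / (9 * m ^ 2)) * (rexp (b * Real.log 2) * rexp (-(V ((2:ℝ)⁻¹ • x)))) := by
          apply mul_le_mul_of_nonneg_right _ (by positivity)
          have := aux_texp (a := 3 * m / 8) (t := ‖x‖) (by linarith) hn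
          have h4 : 4 / (3 * m / 8) ^ 2 = 256 / (9 * m ^ 2) := by
            field_simp; ring
          rw [h4] at this
          convert this using 3
      _ = K * rexp (-(V ((2:ℝ)⁻¹ • x))) := by rw [hK]; ring
  have hcs : Integrable (fun x : Euc d => rexp (-(V ((2:ℝ)⁻¹ • x)))) := by
    exact (integrable_comp_smul_iff volume (fun x : Euc d => rexp (-(V x)))
      (by norm_num : ((2:ℝ)⁻¹) ≠ 0)).2 hInt
  have hmeas : AEStronglyMeasurable (fun x : Euc d => ‖x‖ * rexp (-(V x))) volume := by
    apply Continuous.aestronglyMeasurable; have hVc := hV.continuous; fun_prop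
  have hIntm : Integrable (fun x : Euc d => ‖x‖ * rexp (-(V x))) := by
    apply (hcs.const_mul K).mono' hmeas
    refine Filter.Eventually.of_forall fun x => ?_
    rw [Real.norm_eq_abs, abs_of_nonneg (by positivity)]
    exact hpt x
  refine ⟨hIntm, ?_⟩
  have hstep := integral_mono hIntm (hcs.const_mul K) hpt
  have hscale : ∫ x : Euc d, rexp (-(V ((2:ℝ)⁻¹ • x))) = (2:ℝ) ^ d * ∫ x : Euc d, rexp (-(V x)) := by
    have := MeasureTheory.Measure.integral_comp_smul (μ := volume) (fun x : Euc d => rexp (-(V x))) (2:ℝ)⁻¹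
    rw [this]
    have hfr : Module.finrank ℝ (Euc d) = d := finrank_euclideanSpace_fin
    rw [hfr]
    rw [smul_eq_mul]
    congr 1
    rw [abs_of_nonneg (by positivity)]
    rw [inv_pow, inv_inv]
  calc ∫ x : Euc d, ‖x‖ * rexp (-(V x))
      ≤ ∫ x : Euc d, K * rexp (-(V ((2:ℝ)⁻¹ • x))) := hstep
    _ = K * ∫ x : Euc d, rexp (-(V ((2:ℝ)⁻¹ • x))) := integral_const_mul _ _
    _ = K * ((2:ℝ) ^ d * ∫ x : Euc d, rexp (-(V x))) := by rw [hscale]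
    _ = _ := by ring

/-- Normalization extraction. -/
lemma norm_extract {V : Euc d → ℝ} (hVc : Continuous V) {c : ℝ} (hc : 0 < c)
    (h : (∫ x : Euc d, rexp (-(V x)) / c) = 1) :
    Integrable (fun x : Euc d => rexp (-(V x))) ∧ (∫ x : Euc d, rexp (-(V x))) = c := by
  by_cases hI : Integrable (fun x : Euc d => rexp (-(V x)))
  · refine ⟨hI, ?_⟩
    rw [integral_div] at h
    field_simp at h
    linarith [h]
  · exfalso
    have : ¬ Integrable (fun x : Euc d => rexp (-(V x)) / c) := by
      intro hI2
      apply hI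
      have := hI2.const_mul c
      refine this.congr (Filter.Eventually.of_forall fun x => ?_)
      field_simp
    rw [integral_undef this] at h
    norm_num at h

lemma Mconst_nonneg (hm : 0 < m) : 0 ≤ Mconst d m b L := by
  unfold Mconst
  have h1 : 0 ≤ ∫ x : Euc d, rexp (-(m / 8 * ‖x‖ ^ 2)) :=
    integral_nonneg fun x => (Real.exp_pos _).le
  positivity

lemma vol_pos (d : ℕ) : 0 < (volume (Metric.ball (0:Euc d) 1)).toReal :=
  ENNReal.toReal_pos (Metric.measure_ball_pos volume 0 one_pos).ne' measure_ball_lt_top.ne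

/-- `P ≤ M * C`. -/
lemma P_ratio (hm : 0 < m) (hb : 0 ≤ b) (hL : 0 ≤ L)
    {V : Euc d → ℝ} (hV : Differentiable ℝ V)
    (hdis : ∀ x, ⟪x, gradient V x⟫ ≥ m * ‖x‖ ^ 2 - b)
    (hlip : LipschitzWith (Real.toNNReal L) (fun x => gradient V x))
    (hInt : Integrable (fun x : Euc d => rexp (-(V x)))) :
    ∫ x : Euc d, ‖x‖ * rexp ‖x‖ * rexp (-(V x)) ≤
      Mconst d m b L * ∫ x : Euc d, rexp (-(V x)) := by
  set vol := (volume (Metric.ball (0:Euc d) 1)).toReal with hvol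
  set Gv := ∫ x : Euc d, rexp (-(m / 8 * ‖x‖ ^ 2)) with hGv
  have hGv0 : 0 ≤ Gv := integral_nonneg fun x => (Real.exp_pos _).le
  have hv := vol_pos d
  have h1 := (P_bound hm hb hL hV hdis hlip).2
  have h2 := normconst_lower hm hb hL hV hdis hlip hInt
  have hM0 := Mconst_nonneg (d := d) (b := b) (L := L) hm
  have key : Mconst d m b L * (vol * rexp (-(V 0) - (b + 2 * L)))
      = rexp (-(V 0) + (b + 2 * L + 3 * m / 4 + 2 * b ^ 2 / m) + 8 / m) * Gv := by
    unfold Mconst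
    rw [← hvol, ← hGv]
    have e1 : rexp ((b + 2 * L + 3 * m / 4 + 2 * b ^ 2 / m) + 8 / m + (b + 2 * L)) *
        rexp (-(V 0) - (b + 2 * L)) =
        rexp (-(V 0) + (b + 2 * L + 3 * m / 4 + 2 * b ^ 2 / m) + 8 / m) := by
      rw [← Real.exp_add]; congr 1; ring
    set E1 := rexp ((b + 2 * L + 3 * m / 4 + 2 * b ^ 2 / m) + 8 / m + (b + 2 * L)) with hE1
    set E2 := rexp (-(V 0) - (b + 2 * L)) with hE2
    rw [← e1]
    have hv' : vol ≠ 0 := ne_of_gt hv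
    field_simp
  calc ∫ x : Euc d, ‖x‖ * rexp ‖x‖ * rexp (-(V x))
      ≤ rexp (-(V 0) + (b + 2 * L + 3 * m / 4 + 2 * b ^ 2 / m) + 8 / m) * Gv := h1
    _ = Mconst d m b L * (vol * rexp (-(V 0) - (b + 2 * L))) := key.symm
    _ ≤ Mconst d m b L * ∫ x : Euc d, rexp (-(V x)) :=
        mul_le_mul_of_nonneg_left h2 hM0

/-- One-sided bound on the log-normalization difference. -/
lemma delta_bound (hm : 0 < m) (hb : 0 ≤ b) (hL : 0 ≤ L)
    {U Ut : Euc d → ℝ} (hU : Differentiable ℝ U) (hUt : Differentiable ℝ Ut)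
    (hdU : ∀ x, ⟪x, gradient U x⟫ ≥ m * ‖x‖ ^ 2 - b)
    (hlipU : LipschitzWith (Real.toNNReal L) (fun x => gradient U x))
    {ε : ℝ} (hε : 0 < ε) (hε1 : ε ≤ 1)
    (hclose : ∀ x, ‖gradient Ut x - gradient U x‖ ≤ ε)
    {Cn Ctn : ℝ} (hCn : 0 < Cn) (hCtn : 0 < Ctn)
    (hIU : Integrable (fun x : Euc d => rexp (-(U x))))
    (hIUt : Integrable (fun x : Euc d => rexp (-(Ut x))))
    (hCneq : (∫ x : Euc d, rexp (-(U x))) = Cn)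
    (hCtneq : (∫ x : Euc d, rexp (-(Ut x))) = Ctn) :
    (Ut 0 - U 0) + Real.log Ctn - Real.log Cn ≤ ε * Mconst d m b L := by
  set δ := Ut 0 - U 0 with hδ
  set M := Mconst d m b L with hMdef
  have hM0 := Mconst_nonneg (d := d) (b := b) (L := L) hm
  have hPint := (P_bound hm hb hL hU hdU hlipU).1
  have hPr := P_ratio hm hb hL hU hdU hlipU hIU
  -- pointwise bound
  have hpt : ∀ x : Euc d, rexp (-(Ut x)) ≤
      rexp (-δ) * (rexp (-(U x)) + ε * (‖x‖ * rexp ‖x‖ * rexp (-(U x)))) := by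
    intro x
    have hW := pot_close hU hUt hε.le hclose x
    have hWle : -(Ut x) ≤ -δ + ε * ‖x‖ + -(U x) := by
      have := (abs_le.1 hW).1
      linarith
    have hn := norm_nonneg x
    calc rexp (-(Ut x)) ≤ rexp (-δ + ε * ‖x‖ + -(U x)) := Real.exp_le_exp.2 hWle
      _ = rexp (-δ) * rexp (ε * ‖x‖) * rexp (-(U x)) := by
          rw [← Real.exp_add, ← Real.exp_add]
      _ ≤ rexp (-δ) * (1 + ε * ‖x‖ * rexp ‖x‖) * rexp (-(U x)) := by
          apply mul_le_mul_of_nonneg_right _ (Real.exp_pos _).le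
          exact mul_le_mul_of_nonneg_left (aux_eps_exp hε.le hε1 hn) (Real.exp_pos _).le
      _ = rexp (-δ) * (rexp (-(U x)) + ε * (‖x‖ * rexp ‖x‖ * rexp (-(U x)))) := by ring
  -- integrate
  have hRHSint : Integrable (fun x : Euc d =>
      rexp (-δ) * (rexp (-(U x)) + ε * (‖x‖ * rexp ‖x‖ * rexp (-(U x))))) :=
    ((hIU.add (hPint.const_mul ε)).const_mul _)
  have hint := integral_mono hIUt hRHSint hpt
  have hval : (∫ x : Euc d,
      rexp (-δ) * (rexp (-(U x)) + ε * (‖x‖ * rexp ‖x‖ * rexp (-(U x)))))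
      = rexp (-δ) * (Cn + ε * ∫ x : Euc d, ‖x‖ * rexp ‖x‖ * rexp (-(U x))) := by
    rw [integral_const_mul, integral_add hIU (hPint.const_mul ε), integral_const_mul, hCneq]
  rw [hCtneq, hval] at hint
  -- hint : Ctn ≤ rexp (-δ) * (Cn + ε * P)
  have h2 : Ctn ≤ rexp (-δ) * (Cn + ε * (M * Cn)) := by
    have : Cn + ε * ∫ x : Euc d, ‖x‖ * rexp ‖x‖ * rexp (-(U x)) ≤ Cn + ε * (M * Cn) := by
      have := mul_le_mul_of_nonneg_left (hPr.trans_eq (by rw [hCneq])) hε.le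
      linarith
    calc Ctn ≤ rexp (-δ) * (Cn + ε * ∫ x : Euc d, ‖x‖ * rexp ‖x‖ * rexp (-(U x))) := hint
      _ ≤ rexp (-δ) * (Cn + ε * (M * Cn)) := mul_le_mul_of_nonneg_left this (Real.exp_pos _).le
  -- take logs
  have hexpΔ : rexp (δ + Real.log Ctn - Real.log Cn) = rexp δ * Ctn / Cn := by
    rw [Real.exp_sub, Real.exp_add, Real.exp_log hCtn, Real.exp_log hCn]
  have h3 : rexp δ * Ctn / Cn ≤ 1 + ε * M := by
    rw [div_le_iff₀ hCn]
    have := mul_le_mul_of_nonneg_left h2 (Real.exp_pos δ).le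
    calc rexp δ * Ctn ≤ rexp δ * (rexp (-δ) * (Cn + ε * (M * Cn))) := this
      _ = Cn + ε * M * Cn := by rw [← mul_assoc, ← Real.exp_add]; simp; ring
      _ = (1 + ε * M) * Cn := by ring
  have h4 : (1:ℝ) + ε * M ≤ rexp (ε * M) := by
    have := Real.add_one_le_exp (ε * M); linarith
  have h5 : rexp (δ + Real.log Ctn - Real.log Cn) ≤ rexp (ε * M) := by
    rw [hexpΔ]; exact h3.trans h4
  exact Real.exp_le_exp.1 h5

end AuxLemmas

/-- Lemma: integrated closeness of log-densities against any dissipative density `ρ̂`.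
The constant `C₁` depends only on `m, b, L, d`, not on `ε`. -/
theorem log_density_integrated_closeness
    (d : ℕ) (hd : 1 ≤ d) (m b L : ℝ) (hm : 0 < m) (hb : 0 ≤ b) (hL : 0 ≤ L) :
    ∃ C₁ : ℝ, 0 < C₁ ∧
      ∀ (ε : ℝ), 0 < ε → ε ≤ 1 →
      ∀ (U Ut Uh : Euc d → ℝ) (Cn Ctn Chn : ℝ), 0 < Cn → 0 < Ctn → 0 < Chn →
      Differentiable ℝ U → Differentiable ℝ Ut → Differentiable ℝ Uh →
      -- `ρ = e^{-U}/C`, `ρ̃ = e^{-Ũ}/C̃` and `ρ̂ = e^{-Û}/Ĉ` are probability densities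
      ((∫ x, Real.exp (-(U x)) / Cn) = 1) →
      ((∫ x, Real.exp (-(Ut x)) / Ctn) = 1) →
      ((∫ x, Real.exp (-(Uh x)) / Chn) = 1) →
      -- `(m,b)`-dissipativity of `U`, `Ũ` and `Û`
      (∀ x, ⟪x, gradient U x⟫ ≥ m * ‖x‖ ^ 2 - b) →
      (∀ x, ⟪x, gradient Ut x⟫ ≥ m * ‖x‖ ^ 2 - b) →
      (∀ x, ⟪x, gradient Uh x⟫ ≥ m * ‖x‖ ^ 2 - b) →
      -- `L`-Lipschitz gradients of `U` and `Ũ`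
      LipschitzWith (Real.toNNReal L) (fun x => gradient U x) →
      LipschitzWith (Real.toNNReal L) (fun x => gradient Ut x) →
      -- `ε`-closeness of the gradients
      (∀ x, ‖gradient Ut x - gradient U x‖ ≤ ε) →
      (∫ x, |Real.log (Real.exp (-(U x)) / Cn) - Real.log (Real.exp (-(Ut x)) / Ctn)| *
        (Real.exp (-(Uh x)) / Chn)) ≤ C₁ * ε := by
  classical
  set M := Mconst d m b L with hM
  have hM0 := Mconst_nonneg (d := d) (b := b) (L := L) hm
  set κ := rexp (b * Real.log 2) * (1 + 256 / (9 * m ^ 2)) * (2:ℝ) ^ d with hκ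
  have hκ0 : 0 < κ := by rw [hκ]; positivity
  refine ⟨κ + M, by linarith, ?_⟩
  intro ε hε hε1 U Ut Uh Cn Ctn Chn hCn hCtn hChn hU hUt hUh hnU hnUt hnUh hdU hdUt hdUh
    hlipU hlipUt hclose
  obtain ⟨hIU, hCneq⟩ := norm_extract hU.continuous hCn hnU
  obtain ⟨hIUt, hCtneq⟩ := norm_extract hUt.continuous hCtn hnUt
  obtain ⟨hIUh, hChneq⟩ := norm_extract hUh.continuous hChn hnUh
  have hΔ1 := delta_bound hm hb hL hU hUt hdU hlipU hε hε1 hclose hCn hCtn hIU hIUt hCneq hCtneq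
  have hclose' : ∀ x, ‖gradient U x - gradient Ut x‖ ≤ ε := fun x => by
    rw [norm_sub_rev]; exact hclose x
  have hΔ2 := delta_bound hm hb hL hUt hU hdUt hlipUt hε hε1 hclose' hCtn hCn hIUt hIU
    hCtneq hCneq
  set Δ := (Ut 0 - U 0) + Real.log Ctn - Real.log Cn with hΔdef
  have habsΔ : |Δ| ≤ ε * M := abs_le.2 ⟨by rw [hΔdef]; linarith [hΔ2], hΔ1⟩
  obtain ⟨hIh_mom, hIh_bound⟩ := hat_moment hm hb hUh hdUh hIUh
  -- pointwise bound on the integrand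
  have hpt : ∀ x : Euc d, |Real.log (rexp (-(U x)) / Cn) - Real.log (rexp (-(Ut x)) / Ctn)| *
      (rexp (-(Uh x)) / Chn) ≤ (ε * ‖x‖ + ε * M) * (rexp (-(Uh x)) / Chn) := by
    intro x
    have hρ : 0 ≤ rexp (-(Uh x)) / Chn := by positivity
    apply mul_le_mul_of_nonneg_right _ hρ
    have e1 : Real.log (rexp (-(U x)) / Cn) = -(U x) - Real.log Cn := by
      rw [Real.log_div (Real.exp_ne_zero _) (ne_of_gt hCn), Real.log_exp]
    have e2 : Real.log (rexp (-(Ut x)) / Ctn) = -(Ut x) - Real.log Ctn := by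
      rw [Real.log_div (Real.exp_ne_zero _) (ne_of_gt hCtn), Real.log_exp]
    rw [e1, e2]
    have hW := pot_close hU hUt hε.le hclose x
    have e3 : (-(U x) - Real.log Cn) - (-(Ut x) - Real.log Ctn)
        = ((Ut x - U x) - (Ut 0 - U 0)) + Δ := by rw [hΔdef]; ring
    rw [e3]
    calc |((Ut x - U x) - (Ut 0 - U 0)) + Δ|
        ≤ |(Ut x - U x) - (Ut 0 - U 0)| + |Δ| := abs_add_le _ _
      _ ≤ ε * ‖x‖ + ε * M := add_le_add hW habsΔ
  -- RHS is integrable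
  have hg1 : Integrable (fun x : Euc d => (ε / Chn) * (‖x‖ * rexp (-(Uh x)))) :=
    hIh_mom.const_mul _
  have hg2 : Integrable (fun x : Euc d => (ε * M / Chn) * rexp (-(Uh x))) :=
    hIUh.const_mul _
  have hgeq : (fun x : Euc d => (ε * ‖x‖ + ε * M) * (rexp (-(Uh x)) / Chn))
      = fun x : Euc d => (ε / Chn) * (‖x‖ * rexp (-(Uh x))) + (ε * M / Chn) * rexp (-(Uh x)) := by
    funext x; field_simp
  have hgint : Integrable (fun x : Euc d => (ε * ‖x‖ + ε * M) * (rexp (-(Uh x)) / Chn)) := by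
    rw [hgeq]; exact hg1.add hg2
  have hmono := integral_mono_of_nonneg
      (Filter.Eventually.of_forall fun x : Euc d => by positivity)
      hgint (Filter.Eventually.of_forall hpt)
  have hgval : (∫ x : Euc d, (ε * ‖x‖ + ε * M) * (rexp (-(Uh x)) / Chn)) ≤ (κ + M) * ε := by
    rw [hgeq, integral_add hg1 hg2, integral_const_mul, integral_const_mul, hChneq]
    have h1 : (∫ x : Euc d, ‖x‖ * rexp (-(Uh x))) ≤ κ * Chn := by
      rw [hκ]; exact hIh_bound.trans_eq (by rw [hChneq])
    have h2 : ε / Chn * ∫ x : Euc d, ‖x‖ * rexp (-(Uh x)) ≤ ε / Chn * (κ * Chn) :=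
      mul_le_mul_of_nonneg_left h1 (by positivity)
    have h3 : ε / Chn * (κ * Chn) = κ * ε := by field_simp
    have h4 : ε * M / Chn * Chn = ε * M := by field_simp
    nlinarith [h2]
  exact hmono.trans hgval
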